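/- Let F_q be a finite field with nontrivial additive character ψ, let v divide q−1, let H ≤ F_q^* have index v with coset representatives T, and let g : T → {0,−1,1} be balanced (equal numbers of values −1 and 1) with g(z) = 0 iff z ∈ H. Define f_2(y) = Σ_{z∈T} 1_H(y/z) g(z) for y ≠ 0 and f_2(0)=0, and f̂_2(a) = q^(−1/2) Σ_y f_2(y) ψ(ay). If ε > 0 is such that |G(χ)/√q − 1| ≤ ε for every nontrivial multiplicative character χ of order dividing v, then max_{a ∈ F_q} |f̂_2(a)| ≤ 1 + εv. -/

import Mathlib

open scoped Classical

lemma real_pow_eq_one' {x : ℝ} {v : ℕ} (hx : 0 ≤ x) (hv : v ≠ 0) (h : x ^ v = 1) : x = 1 := by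
  rcases lt_trichotomy x 1 with h1 | h1 | h1
  · exact absurd h (by have := pow_lt_one₀ hx h1 hv; linarith)
  · exact h1
  · exact absurd h (by have := one_lt_pow₀ h1 hv; linarith)

lemma geom_sum_eq_ite' {w : ℂ} {v : ℕ} (hw : w ^ v = 1) :
    ∑ j ∈ Finset.range v, w ^ j = if w = 1 then (v : ℂ) else 0 := by
  split_ifs with h
  · subst h; simp
  · rw [geom_sum_eq h, hw]; simp

lemma exists_char' (G : Type*) [CommGroup G] [Finite G] [IsCyclic G]
    (v : ℕ) (hv0 : 0 < v) (hv : v ∣ Nat.card G) :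
    ∃ φ : G →* ℂˣ, (∀ u : G, (φ u = 1 ↔ ∃ x : G, x ^ v = u)) ∧
      ∀ j : ℕ, 0 < j → j < v → ∃ u : G, (φ u) ^ j ≠ 1 := by
  have hprim := Complex.isPrimitiveRoot_exp v hv0.ne'
  set ω : ℂˣ := (hprim.isUnit hv0.ne').unit with hω
  have hωprim : IsPrimitiveRoot ω v := hprim.isUnit_unit hv0.ne'
  have hordω : orderOf ω = v := hωprim.eq_orderOf.symm
  set n := Nat.card G with hn
  obtain ⟨t, ht⟩ := hv
  let f : ℤ →+ Additive ℂˣ :=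
    AddMonoidHom.mk' (fun m => Additive.ofMul (ω ^ m)) (fun x y => by
      simp [zpow_add])
  have hfn : f (n : ℤ) = 0 := by
    show Additive.ofMul (ω ^ (n : ℤ)) = 0
    have : ω ^ (n : ℤ) = 1 := by
      rw [zpow_natCast, ht, pow_mul, hωprim.pow_eq_one, one_pow]
    rw [this]; rfl
  let F1 : ZMod n →+ Additive ℂˣ := ZMod.lift n ⟨f, hfn⟩
  let φ₀ : Multiplicative (ZMod n) →* ℂˣ := AddMonoidHom.toMultiplicativeLeft F1
  have hφ₀ : ∀ m : ℤ, φ₀ (Multiplicative.ofAdd ((m : ZMod n))) = ω ^ m := by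
    intro m
    show Additive.toMul (F1 ((m : ZMod n))) = ω ^ m
    rw [show F1 ((m : ZMod n)) = f m from ZMod.lift_coe n ⟨f, hfn⟩ m]
    rfl
  let e : Multiplicative (ZMod n) ≃* G := zmodCyclicMulEquiv (inferInstance : IsCyclic G)
  refine ⟨φ₀.comp e.symm.toMonoidHom, ?_, ?_⟩
  · intro u
    obtain ⟨m, hm⟩ := ZMod.intCast_surjective (Multiplicative.toAdd (e.symm u))
    have hu : u = e (Multiplicative.ofAdd ((m : ZMod n))) := by
      rw [hm]; simp
    have hval : (φ₀.comp e.symm.toMonoidHom) u = ω ^ m := by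
      rw [hu]; simp only [MonoidHom.comp_apply, MulEquiv.coe_toMonoidHom,
        MulEquiv.symm_apply_apply]
      exact hφ₀ m
    rw [hval]
    have h1 : ω ^ m = 1 ↔ (v : ℤ) ∣ m := by
      rw [← hordω, orderOf_dvd_iff_zpow_eq_one]
    rw [h1]
    constructor
    · rintro ⟨s, hs⟩
      refine ⟨e (Multiplicative.ofAdd ((s : ZMod n))), ?_⟩
      rw [hu, ← map_pow]
      congr 1
      rw [← ofAdd_nsmul]
      congr 1
      rw [nsmul_eq_mul, hs]
      push_cast
      ring
    · rintro ⟨x, hx⟩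
      obtain ⟨l, hl⟩ := ZMod.intCast_surjective (Multiplicative.toAdd (e.symm x))
      have hx' : x = e (Multiplicative.ofAdd ((l : ZMod n))) := by rw [hl]; simp
      have hxv : x ^ v = e (Multiplicative.ofAdd (((v * l : ℤ) : ZMod n))) := by
        rw [hx', ← map_pow, ← ofAdd_nsmul, nsmul_eq_mul]
        push_cast
        ring_nf
      rw [hxv, hu] at hx
      have := e.injective hx
      have h2 : ((v * l : ℤ) : ZMod n) = ((m : ℤ) : ZMod n) := Multiplicative.ofAdd.injective this
      rw [ZMod.intCast_eq_intCast_iff] at h2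
      have h3 : (n : ℤ) ∣ m - v * l := Int.ModEq.dvd h2
      have h4 : (v : ℤ) ∣ (n : ℤ) := ⟨t, by exact_mod_cast ht⟩
      have h5 : (v : ℤ) ∣ m - v * l := h4.trans h3
      have : (v : ℤ) ∣ m := by
        have := dvd_add h5 (Dvd.intro l rfl)
        simpa using this
      exact this
  · intro j hj0 hjv
    refine ⟨e (Multiplicative.ofAdd (((1 : ℤ) : ZMod n))), ?_⟩
    have hval : (φ₀.comp e.symm.toMonoidHom) (e (Multiplicative.ofAdd (((1 : ℤ) : ZMod n))))
        = ω := by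
      simp only [MonoidHom.comp_apply, MulEquiv.coe_toMonoidHom, MulEquiv.symm_apply_apply]
      rw [hφ₀ 1, zpow_one]
    rw [hval]
    exact pow_ne_one_of_lt_orderOf hj0.ne' (hordω ▸ hjv)

theorem fourier_bound_of_gauss_sums (F : Type*) [Field F] [Fintype F]
    (ψ : AddChar F ℂ) (hψ : ψ ≠ 1) (v : ℕ) (hv0 : 0 < v)
    (hv : v ∣ Fintype.card F - 1)
    (T : Finset F) (hT0 : ∀ z ∈ T, z ≠ 0)
    (hT : ∀ y : F, y ≠ 0 → ∃! z, z ∈ T ∧ ∃ x : F, x ≠ 0 ∧ x ^ v = y / z)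
    (g : F → ℝ)
    (hgval : ∀ z ∈ T, g z = 0 ∨ g z = 1 ∨ g z = -1)
    (hgbal : ∑ z ∈ T, g z = 0)
    (hg0 : ∀ z ∈ T, (g z = 0 ↔ ∃ x : F, x ≠ 0 ∧ x ^ v = z))
    (ε : ℝ) (hε : 0 < ε)
    (hGauss : ∀ χ : MulChar F ℂ, χ ≠ 1 → orderOf χ ∣ v →
      ‖(gaussSum χ ψ / (Real.sqrt (Fintype.card F) : ℂ) - 1)‖ ≤ ε) :
    ∀ a : F, ‖((1 / (Real.sqrt (Fintype.card F) : ℂ)) *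
        ∑ y : F, (if y = 0 then 0 else
          ∑ z ∈ T, (if ∃ x : F, x ≠ 0 ∧ x ^ v = y / z then (1 : ℂ) else 0) * (g z : ℂ)) *
          ψ (a * y))‖ ≤ 1 + ε * v := by
  intro a
  -- set up the character χ
  have hvn : v ∣ Nat.card Fˣ := by
    rw [Nat.card_eq_fintype_card, Fintype.card_units]; exact hv
  obtain ⟨φ, hφ1, hφ2⟩ := exists_char' Fˣ v hv0 hvn
  set χ : MulChar F ℂ := MulChar.ofUnitHom φ with hχdef
  have hχu : ∀ (u : F) (hu : u ≠ 0), χ u = φ (Units.mk0 u hu) := by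
    intro u hu
    have : u = ((Units.mk0 u hu : Fˣ) : F) := rfl
    rw [hχdef]
    conv_lhs => rw [this]
    exact MulChar.ofUnitHom_coe φ _
  -- (B) characterization of χ u = 1
  have hB : ∀ (u : F), u ≠ 0 → (χ u = 1 ↔ ∃ x : F, x ≠ 0 ∧ x ^ v = u) := by
    intro u hu
    rw [hχu u hu, Units.val_eq_one, hφ1]
    constructor
    · intro h1
      obtain ⟨x, hx⟩ := h1
      refine ⟨(x : F), x.ne_zero, ?_⟩
      have := congrArg (Units.val) hx
      simpa using this
    · rintro ⟨x, hx0, hxv⟩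
      refine ⟨Units.mk0 x hx0, ?_⟩
      ext
      simpa using hxv
  -- (A) values are v-th roots of unity
  have hA : ∀ (u : F), u ≠ 0 → (χ u) ^ v = 1 := by
    intro u hu
    rw [hχu u hu]
    have h1 : φ (Units.mk0 u hu) ^ v = 1 := by
      have : φ ((Units.mk0 u hu) ^ v) = 1 := (hφ1 _).mpr ⟨Units.mk0 u hu, rfl⟩
      rw [map_pow] at this; exact this
    calc (↑(φ (Units.mk0 u hu)) : ℂ) ^ v = ((φ (Units.mk0 u hu) ^ v : ℂˣ) : ℂ) := by
          rw [Units.val_pow_eq_pow_val]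
      _ = 1 := by rw [h1]; rfl
  have habs : ∀ (u : F), u ≠ 0 → ‖χ u‖ = 1 := by
    intro u hu
    refine real_pow_eq_one' (norm_nonneg _) hv0.ne' ?_
    rw [← norm_pow, hA u hu, norm_one]
  -- χ z⁻¹ = (χ z)⁻¹ for z ≠ 0
  have hinv : ∀ (z : F), z ≠ 0 → χ z⁻¹ = (χ z)⁻¹ := by
    intro z hz
    have h1 : χ z * χ z⁻¹ = 1 := by
      rw [← map_mul, mul_inv_cancel₀ hz, map_one]
    exact eq_inv_of_mul_eq_one_right h1
  have hχne : ∀ (z : F), z ≠ 0 → χ z ≠ 0 := by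
    intro z hz h
    have := habs z hz
    rw [h, norm_zero] at this; norm_num at this
  -- the coefficients
  set c : ℕ → ℂ := fun j => ∑ z ∈ T, (g z : ℂ) * ((χ z)⁻¹) ^ j with hcdef
  have hc0 : c 0 = 0 := by
    rw [hcdef]
    simp only [pow_zero, mul_one]
    rw [← Complex.ofReal_sum]
    rw [hgbal]
    simp
  have hgz1 : ∀ z ∈ T, |g z| ≤ 1 := by
    intro z hz
    rcases hgval z hz with h | h | h <;> rw [h] <;> norm_num
  have hcbound : ∀ j : ℕ, ‖c j‖ ≤ (T.card : ℝ) := by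
    intro j
    rw [hcdef]
    calc ‖∑ z ∈ T, (g z : ℂ) * ((χ z)⁻¹) ^ j‖
        ≤ ∑ z ∈ T, ‖(g z : ℂ) * ((χ z)⁻¹) ^ j‖ := norm_sum_le _ _
      _ ≤ ∑ z ∈ T, 1 := by
          refine Finset.sum_le_sum fun z hz => ?_
          rw [norm_mul, norm_pow, norm_inv, habs z (hT0 z hz)]
          simp only [inv_one, one_pow, mul_one]
          rw [Complex.norm_real, Real.norm_eq_abs]
          exact hgz1 z hz
      _ = (T.card : ℝ) := by simp
  -- |T| ≤ v
  have hTcard : (T.card : ℝ) ≤ (v : ℝ) := by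
    have : T.card ≤ v := by
      have hinj : Set.InjOn (fun z => χ z) T := by
        intro z₁ h₁ z₂ h₂ h
        have hz₁ := hT0 z₁ h₁
        have hz₂ := hT0 z₂ h₂
        have hdiv : χ (z₁ / z₂) = 1 := by
          rw [div_eq_mul_inv, map_mul, hinv z₂ hz₂]
          simp only at h
          rw [h, mul_inv_cancel₀ (hχne z₂ hz₂)]
        have hex : ∃ x : F, x ≠ 0 ∧ x ^ v = z₁ / z₂ := (hB _ (by
          exact div_ne_zero hz₁ hz₂)).mp hdiv
        obtain ⟨b, _, hbu⟩ := hT z₁ hz₁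
        have e1 : z₁ = b := hbu z₁ ⟨h₁, ⟨1, one_ne_zero, by rw [one_pow, div_self hz₁]⟩⟩
        have e2 : z₂ = b := hbu z₂ ⟨h₂, hex⟩
        rw [e1, e2]
      have hmaps : ∀ z ∈ T, χ z ∈ (Polynomial.nthRoots v (1 : ℂ)).toFinset := by
        intro z hz
        rw [Multiset.mem_toFinset, Polynomial.mem_nthRoots hv0]
        exact hA z (hT0 z hz)
      calc T.card ≤ (Polynomial.nthRoots v (1 : ℂ)).toFinset.card :=
            Finset.card_le_card_of_injOn _ hmaps hinj
        _ ≤ Multiset.card (Polynomial.nthRoots v (1 : ℂ)) := Multiset.toFinset_card_le _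
        _ ≤ v := Polynomial.card_nthRoots v 1
    exact_mod_cast this
  -- the inner Fourier-type sums
  set D : ℕ → ℂ := fun j => ∑ y : F, (if y = 0 then 0 else (χ y) ^ j) * ψ (a * y) with hDdef
  -- pointwise identity
  have key1 : ∀ y : F, (if y = 0 then (0 : ℂ) else
      ∑ z ∈ T, (if ∃ x : F, x ≠ 0 ∧ x ^ v = y / z then (1 : ℂ) else 0) * (g z : ℂ))
      = (v : ℂ)⁻¹ * ∑ j ∈ Finset.range v, c j * (if y = 0 then 0 else (χ y) ^ j) := by
    intro y
    by_cases hy : y = 0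
    · simp [hy]
    simp only [if_neg hy]
    have hswap : ∑ j ∈ Finset.range v, c j * (χ y) ^ j
        = ∑ z ∈ T, (g z : ℂ) * (if ∃ x : F, x ≠ 0 ∧ x ^ v = y / z then (v : ℂ) else 0) := by
      rw [hcdef]
      simp only [Finset.sum_mul]
      rw [Finset.sum_comm]
      refine Finset.sum_congr rfl fun z hz => ?_
      have hz0 := hT0 z hz
      have hstep : ∀ j ∈ Finset.range v,
          (g z : ℂ) * ((χ z)⁻¹) ^ j * (χ y) ^ j = (g z : ℂ) * (χ (y / z)) ^ j := by
        intro j _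
        rw [div_eq_mul_inv, map_mul, hinv z hz0, mul_pow]
        ring
      rw [Finset.sum_congr rfl hstep, ← Finset.mul_sum,
        geom_sum_eq_ite' (hA (y / z) (div_ne_zero hy hz0))]
      congr 1
      exact if_congr (hB (y / z) (div_ne_zero hy hz0)) rfl rfl
    rw [hswap, Finset.mul_sum]
    refine Finset.sum_congr rfl fun z hz => ?_
    have hvC : ((v : ℂ)) ≠ 0 := Nat.cast_ne_zero.mpr hv0.ne'
    split_ifs with h
    · field_simp
    · simp
  -- the key decomposition of the full sum
  have key : ∑ y : F, (if y = 0 then 0 else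
        ∑ z ∈ T, (if ∃ x : F, x ≠ 0 ∧ x ^ v = y / z then (1 : ℂ) else 0) * (g z : ℂ)) * ψ (a * y)
      = (v : ℂ)⁻¹ * ∑ j ∈ Finset.range v, c j * D j := by
    calc ∑ y : F, (if y = 0 then 0 else
        ∑ z ∈ T, (if ∃ x : F, x ≠ 0 ∧ x ^ v = y / z then (1 : ℂ) else 0) * (g z : ℂ)) * ψ (a * y)
        = ∑ y : F, ((v : ℂ)⁻¹ * ∑ j ∈ Finset.range v,
            c j * (if y = 0 then 0 else (χ y) ^ j)) * ψ (a * y) :=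
          Finset.sum_congr rfl fun y _ => by rw [key1 y]
      _ = (v : ℂ)⁻¹ * ∑ j ∈ Finset.range v, c j * D j := by
          rw [hDdef]
          simp only [Finset.mul_sum, Finset.sum_mul]
          rw [Finset.sum_comm]
          exact Finset.sum_congr rfl fun j _ => Finset.sum_congr rfl fun y _ => by ring
  -- identification with MulChar powers
  have hpow : ∀ (j : ℕ), j ≠ 0 → ∀ y : F, (if y = 0 then (0 : ℂ) else (χ y) ^ j) = (χ ^ j) y := by
    intro j hj y
    by_cases hy : y = 0
    · rw [if_pos hy, hy, MulChar.map_zero]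
    · rw [if_neg hy, MulChar.pow_apply' χ hj y]
  have hχj_ne : ∀ (j : ℕ), 0 < j → j < v → (χ ^ j) ≠ 1 := by
    intro j h0 hjv h
    obtain ⟨u, hu⟩ := hφ2 j h0 hjv
    apply hu
    have h1 : (χ ^ j) ((u : Fˣ) : F) = 1 := by rw [h, MulChar.one_apply_coe]
    rw [MulChar.pow_apply_coe] at h1
    have hcu : χ ((u : Fˣ) : F) = ((φ u : ℂˣ) : ℂ) := by
      rw [hχdef]; exact MulChar.ofUnitHom_coe φ u
    ext
    rw [Units.val_pow_eq_pow_val, ← hcu, h1]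
    rfl
  have hχv : χ ^ v = 1 := by
    apply MulChar.ext
    intro u
    rw [MulChar.pow_apply_coe, MulChar.one_apply_coe, hA ((u : Fˣ) : F) u.ne_zero]
  have hord : ∀ j : ℕ, orderOf (χ ^ j) ∣ v := by
    intro j
    apply orderOf_dvd_of_pow_eq_one
    rw [← pow_mul, mul_comm, pow_mul, hχv, one_pow]
  by_cases ha : a = 0
  · -- a = 0 : everything vanishes
    have hzero : ∑ j ∈ Finset.range v, c j * D j = 0 := by
      refine Finset.sum_eq_zero fun j hj => ?_
      by_cases hj0 : j = 0
      · rw [hj0, hc0, zero_mul]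
      · have hDj : D j = 0 := by
          show (∑ y : F, (if y = 0 then (0 : ℂ) else (χ y) ^ j) * ψ (a * y)) = 0
          have : ∀ y : F, (if y = 0 then (0 : ℂ) else (χ y) ^ j) * ψ (a * y) = (χ ^ j) y := by
            intro y
            rw [hpow j hj0 y, ha, zero_mul, AddChar.map_zero_eq_one, mul_one]
          rw [Finset.sum_congr rfl fun y _ => this y]
          exact MulChar.sum_eq_zero_of_ne_one
            (hχj_ne j (Nat.pos_of_ne_zero hj0) (Finset.mem_range.mp hj))
        rw [hDj, mul_zero]
    rw [key, hzero, mul_zero, mul_zero, norm_zero]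
    positivity
  -- now a ≠ 0
  set s : ℂ := (Real.sqrt (Fintype.card F) : ℂ) with hsdef
  have hs0 : s ≠ 0 := by
    rw [hsdef, Ne, Complex.ofReal_eq_zero]
    exact (Real.sqrt_pos.mpr (by exact_mod_cast Fintype.card_pos)).ne'
  have hvC : ((v : ℂ)) ≠ 0 := Nat.cast_ne_zero.mpr hv0.ne'
  have hvR : ((v : ℝ)) ≠ 0 := Nat.cast_ne_zero.mpr hv0.ne'
  have hD : ∀ j : ℕ, j ≠ 0 → D j = ((χ a) ^ j)⁻¹ * gaussSum (χ ^ j) ψ := by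
    intro j hj
    have h1 : D j = gaussSum (χ ^ j) (ψ.mulShift a) := by
      show (∑ y : F, (if y = 0 then (0 : ℂ) else (χ y) ^ j) * ψ (a * y)) = _
      unfold gaussSum
      refine Finset.sum_congr rfl fun y _ => ?_
      rw [hpow j hj y, AddChar.mulShift_apply]
    have h2 := gaussSum_mulShift (χ ^ j) ψ (Units.mk0 a ha)
    have h3 : (χ ^ j) ((Units.mk0 a ha : Fˣ) : F) = (χ a) ^ j := MulChar.pow_apply' χ hj a
    rw [h3] at h2
    rw [h1, ← h2, inv_mul_cancel_left₀ (pow_ne_zero j (hχne a ha))]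
    rfl
  obtain ⟨b, hbP, hbu⟩ := hT a⁻¹ (inv_ne_zero ha)
  obtain ⟨hbT, hbQ⟩ := hbP
  have hQiff : ∀ z : F, z ≠ 0 → ((χ (a * z) = 1) ↔ ∃ x : F, x ≠ 0 ∧ x ^ v = a⁻¹ / z) := by
    intro z hz
    rw [hB (a * z) (mul_ne_zero ha hz)]
    constructor
    · rintro ⟨x, hx0, hxv⟩
      exact ⟨x⁻¹, inv_ne_zero hx0, by rw [inv_pow, hxv, div_eq_mul_inv, ← mul_inv]⟩
    · rintro ⟨x, hx0, hxv⟩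
      refine ⟨x⁻¹, inv_ne_zero hx0, ?_⟩
      rw [inv_pow, hxv, div_eq_mul_inv, ← mul_inv, inv_inv]
  have hMsum : ∑ j ∈ Finset.range v, c j * ((χ a)⁻¹) ^ j = (v : ℂ) * (g b : ℂ) := by
    rw [hcdef]
    simp only [Finset.sum_mul]
    rw [Finset.sum_comm]
    have hstep : ∀ z ∈ T, (∑ j ∈ Finset.range v, (g z : ℂ) * ((χ z)⁻¹) ^ j * ((χ a)⁻¹) ^ j)
        = (g z : ℂ) * (if ∃ x : F, x ≠ 0 ∧ x ^ v = a⁻¹ / z then (v : ℂ) else 0) := by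
      intro z hz
      have hz0 := hT0 z hz
      have e1 : ∀ j ∈ Finset.range v, (g z : ℂ) * ((χ z)⁻¹) ^ j * ((χ a)⁻¹) ^ j
          = (g z : ℂ) * ((χ (a * z))⁻¹) ^ j := by
        intro j _
        rw [map_mul, mul_inv, mul_pow]
        ring
      rw [Finset.sum_congr rfl e1, ← Finset.mul_sum]
      congr 1
      have hw : ((χ (a * z))⁻¹) ^ v = 1 := by
        rw [inv_pow, hA (a * z) (mul_ne_zero ha hz0), inv_one]
      rw [geom_sum_eq_ite' hw]
      exact if_congr (inv_eq_one.trans (hQiff z hz0)) rfl rfl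
    rw [Finset.sum_congr rfl hstep, Finset.sum_eq_single b]
    · rw [if_pos hbQ]; ring
    · intro z hz hzb
      rw [if_neg, mul_zero]
      intro hQ
      exact hzb (hbu z ⟨hz, hQ⟩)
    · intro hbnot; exact absurd hbT hbnot
  have expand : ∀ j ∈ Finset.range v, (1 / s) * (c j * D j)
      = c j * ((χ a)⁻¹) ^ j + c j * ((χ a) ^ j)⁻¹ * (gaussSum (χ ^ j) ψ / s - 1) := by
    intro j _
    by_cases hj0 : j = 0
    · rw [hj0, hc0]; ring
    · rw [hD j hj0, inv_pow]
      field_simp [hs0, pow_ne_zero j (hχne a ha)]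
      ring
  have main : (1 / s) * ∑ y : F, (if y = 0 then 0 else
        ∑ z ∈ T, (if ∃ x : F, x ≠ 0 ∧ x ^ v = y / z then (1 : ℂ) else 0) * (g z : ℂ)) * ψ (a * y)
      = (g b : ℂ) + (v : ℂ)⁻¹ * ∑ j ∈ Finset.range v,
          c j * ((χ a) ^ j)⁻¹ * (gaussSum (χ ^ j) ψ / s - 1) := by
    rw [key]
    calc (1 / s) * ((v : ℂ)⁻¹ * ∑ j ∈ Finset.range v, c j * D j)
        = (v : ℂ)⁻¹ * ∑ j ∈ Finset.range v, (1 / s) * (c j * D j) := by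
          rw [← mul_assoc, mul_comm (1 / s) ((v : ℂ)⁻¹), mul_assoc, Finset.mul_sum]
      _ = (v : ℂ)⁻¹ * ∑ j ∈ Finset.range v, (c j * ((χ a)⁻¹) ^ j
            + c j * ((χ a) ^ j)⁻¹ * (gaussSum (χ ^ j) ψ / s - 1)) := by
          rw [Finset.sum_congr rfl expand]
      _ = (g b : ℂ) + (v : ℂ)⁻¹ * ∑ j ∈ Finset.range v,
            c j * ((χ a) ^ j)⁻¹ * (gaussSum (χ ^ j) ψ / s - 1) := by
          rw [Finset.sum_add_distrib, mul_add, hMsum]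
          congr 1
          field_simp
  rw [main]
  refine le_trans (norm_add_le _ _) ?_
  have h1 : ‖((g b : ℂ))‖ ≤ 1 := by
    rw [Complex.norm_real, Real.norm_eq_abs]
    exact hgz1 b hbT
  have h2 : ‖((v : ℂ)⁻¹ * ∑ j ∈ Finset.range v,
      c j * ((χ a) ^ j)⁻¹ * (gaussSum (χ ^ j) ψ / s - 1))‖ ≤ ε * v := by
    rw [norm_mul, norm_inv, Complex.norm_natCast]
    have hbound : ∀ j ∈ Finset.range v,
        ‖c j * ((χ a) ^ j)⁻¹ * (gaussSum (χ ^ j) ψ / s - 1)‖ ≤ (v : ℝ) * ε := by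
      intro j hj
      by_cases hj0 : j = 0
      · rw [hj0, hc0]
        simp only [zero_mul, norm_zero]
        positivity
      · rw [norm_mul, norm_mul]
        have e1 : ‖((χ a) ^ j)⁻¹‖ = 1 := by
          rw [norm_inv, norm_pow, habs a ha, one_pow, inv_one]
        have e2 : ‖gaussSum (χ ^ j) ψ / s - 1‖ ≤ ε := by
          rw [hsdef]
          exact hGauss (χ ^ j) (hχj_ne j (Nat.pos_of_ne_zero hj0) (Finset.mem_range.mp hj))
            (hord j)
        rw [e1, mul_one]
        have e3 : ‖c j‖ ≤ (v : ℝ) := le_trans (hcbound j) hTcard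
        exact mul_le_mul e3 e2 (norm_nonneg _) (by positivity)
    calc (v : ℝ)⁻¹ * ‖∑ j ∈ Finset.range v,
          c j * ((χ a) ^ j)⁻¹ * (gaussSum (χ ^ j) ψ / s - 1)‖
        ≤ (v : ℝ)⁻¹ * ∑ j ∈ Finset.range v,
            ‖c j * ((χ a) ^ j)⁻¹ * (gaussSum (χ ^ j) ψ / s - 1)‖ := by
          refine mul_le_mul_of_nonneg_left (norm_sum_le _ _) (by positivity)
      _ ≤ (v : ℝ)⁻¹ * ∑ _j ∈ Finset.range v, (v : ℝ) * ε := by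
          refine mul_le_mul_of_nonneg_left (Finset.sum_le_sum hbound) (by positivity)
      _ = ε * v := by
          rw [Finset.sum_const, Finset.card_range, nsmul_eq_mul]
          field_simp
  linarith
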